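/- For all a > 0 and x ≥ 0, the two-sided estimate (x^a/a)·exp(-a·x/(a+1)) ≤ γ(a,x) ≤ (x^a/a)·min(1, (1 + a·e^{-x})/(a+1)) holds, where γ is the lower incomplete Gamma function. -/

import Mathlib

open intervalIntegral Real Set

private lemma aux_integrable (p c x : ℝ) (hp : -1 < p) :
    IntervalIntegrable (fun t : ℝ => t ^ p * Real.exp (-(c * t))) MeasureTheory.volume 0 x :=
  (intervalIntegral.intervalIntegrable_rpow' hp).mul_continuousOn
    (Real.continuous_exp.comp (continuous_const.mul continuous_id).neg).continuousOn

private lemma aux_exp_deriv (c t : ℝ) :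
    HasDerivAt (fun s : ℝ => Real.exp (-(c * s))) (-c * Real.exp (-(c * t))) t := by
  have h := (Real.hasDerivAt_exp (-(c * t))).comp t (((hasDerivAt_id t).const_mul c).neg)
  exact h.congr_deriv (by ring)

private lemma aux_int2 (a c x : ℝ) (ha : 0 < a) :
    IntervalIntegrable (fun t : ℝ => (a * t ^ (a - 1) - c * t ^ a) * Real.exp (-(c * t)))
      MeasureTheory.volume 0 x := by
  have h1 := (aux_integrable (a - 1) c x (by linarith)).const_mul a
  have h2 := (aux_integrable a c x (by linarith)).const_mul c
  have := h1.sub h2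
  apply this.congr
  intro t _
  beta_reduce
  ring

private lemma aux_ftc (a c x : ℝ) (ha : 0 < a) (hx : 0 ≤ x) :
    ∫ t in (0:ℝ)..x, (a * t ^ (a - 1) - c * t ^ a) * Real.exp (-(c * t))
      = x ^ a * Real.exp (-(c * x)) := by
  have hcont : ContinuousOn (fun t : ℝ => t ^ a * Real.exp (-(c * t))) (Icc 0 x) := by
    apply ContinuousOn.mul _ (Real.continuous_exp.comp
      (continuous_const.mul continuous_id).neg).continuousOn
    intro t _
    exact (Real.continuousAt_rpow_const t a (Or.inr ha.le)).continuousWithinAt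
  have hderiv : ∀ t ∈ Ioo (0:ℝ) x,
      HasDerivAt (fun t : ℝ => t ^ a * Real.exp (-(c * t)))
        ((a * t ^ (a - 1) - c * t ^ a) * Real.exp (-(c * t))) t := by
    intro t ht
    have h1 : HasDerivAt (fun s : ℝ => s ^ a) (a * t ^ (a - 1)) t := by
      simpa [mul_comm] using Real.hasDerivAt_rpow_const (x := t) (p := a) (Or.inl ht.1.ne')
    have := h1.mul (aux_exp_deriv c t)
    exact this.congr_deriv (by ring)
  rw [intervalIntegral.integral_eq_sub_of_hasDerivAt_of_le hx hcont hderiv (aux_int2 a c x ha)]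
  simp [Real.zero_rpow ha.ne']

noncomputable def lowerGamma (a x : ℝ) : ℝ := ∫ t in (0:ℝ)..x, t ^ (a - 1) * Real.exp (-t)

theorem lowerGamma_two_sided (a x : ℝ) (ha : 0 < a) (hx : 0 ≤ x) :
    x ^ a / a * Real.exp (-(a * x) / (a + 1)) ≤ lowerGamma a x ∧
      lowerGamma a x ≤ x ^ a / a * min 1 ((1 + a * Real.exp (-x)) / (a + 1)) := by
  have ha1 : (0:ℝ) < a + 1 := by linarith
  set c := a / (a + 1) with hc
  have hγint : IntervalIntegrable (fun t : ℝ => t ^ (a - 1) * Real.exp (-t))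
      MeasureTheory.volume 0 x := by
    simpa using aux_integrable (a - 1) 1 x (by linarith)
  constructor
  · -- Lower bound
    have hpt : ∀ t ∈ Icc (0:ℝ) x,
        (a * t ^ (a - 1) - c * t ^ a) * Real.exp (-(c * t))
          ≤ a * (t ^ (a - 1) * Real.exp (-t)) := by
      intro t ht
      rcases eq_or_lt_of_le ht.1 with h0 | h0
      · rw [← h0]
        simp [Real.zero_rpow ha.ne']
      · have hta : t ^ a = t ^ (a - 1) * t := by
          simpa using Real.rpow_add_one h0.ne' (a - 1)
        have hkey : (a - c * t) * Real.exp (-(c * t)) ≤ a * Real.exp (-t) := by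
          have h1 : 1 + -(t / (a + 1)) ≤ Real.exp (-(t / (a + 1))) := by
            linarith [Real.add_one_le_exp (-(t / (a + 1)))]
          have h2 : a - c * t ≤ a * Real.exp (-(t / (a + 1))) := by
            have := mul_le_mul_of_nonneg_left h1 ha.le
            calc a - c * t = a * (1 + -(t / (a + 1))) := by rw [hc]; field_simp; ring
              _ ≤ a * Real.exp (-(t / (a + 1))) := this
          have h3 : a * Real.exp (-t)
              = a * Real.exp (-(t / (a + 1))) * Real.exp (-(c * t)) := by
            rw [mul_assoc, ← Real.exp_add]
            congr 2
            rw [hc]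
            field_simp
            ring
          rw [h3]
          exact mul_le_mul_of_nonneg_right h2 (Real.exp_pos _).le
        calc (a * t ^ (a - 1) - c * t ^ a) * Real.exp (-(c * t))
            = t ^ (a - 1) * ((a - c * t) * Real.exp (-(c * t))) := by rw [hta]; ring
          _ ≤ t ^ (a - 1) * (a * Real.exp (-t)) :=
              mul_le_mul_of_nonneg_left hkey (Real.rpow_nonneg ht.1 _)
          _ = a * (t ^ (a - 1) * Real.exp (-t)) := by ring
    have hmono := intervalIntegral.integral_mono_on hx (aux_int2 a c x ha)
      (hγint.const_mul a) hpt
    rw [aux_ftc a c x ha hx, intervalIntegral.integral_const_mul] at hmono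
    have harg : -(a * x) / (a + 1) = -(c * x) := by rw [hc]; ring
    rw [harg]
    calc x ^ a / a * Real.exp (-(c * x)) = x ^ a * Real.exp (-(c * x)) / a := by ring
      _ ≤ lowerGamma a x := by
          rw [div_le_iff₀ ha, mul_comm (lowerGamma a x) a]
          exact hmono
  · -- Upper bound
    have hxa : (0:ℝ) ≤ x ^ a / a := by positivity
    rw [mul_min_of_nonneg _ _ hxa]
    apply le_min
    · -- trivial bound
      have hpt : ∀ t ∈ Icc (0:ℝ) x,
          t ^ (a - 1) * Real.exp (-t) ≤ t ^ (a - 1) := by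
        intro t ht
        have : Real.exp (-t) ≤ 1 := by
          rw [← Real.exp_zero]
          exact Real.exp_le_exp.mpr (by linarith [ht.1])
        exact mul_le_of_le_one_right (Real.rpow_nonneg ht.1 _) this
      have hmono := intervalIntegral.integral_mono_on hx hγint
        (intervalIntegral.intervalIntegrable_rpow' (by linarith)) hpt
      have hval : ∫ t in (0:ℝ)..x, t ^ (a - 1) = x ^ a / a := by
        rw [integral_rpow (Or.inl (by linarith))]
        simp [Real.zero_rpow ha.ne']
      rw [hval] at hmono
      simpa [lowerGamma] using hmono
    · -- refined bound
      have hval : ∫ t in (0:ℝ)..x, t ^ (a - 1) = x ^ a / a := by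
        rw [integral_rpow (Or.inl (by linarith))]
        simp [Real.zero_rpow ha.ne']
      have hI2 := aux_ftc a 1 x ha hx
      have hint2 : IntervalIntegrable
          (fun t : ℝ => (a * t ^ (a - 1) - 1 * t ^ a) * Real.exp (-(1 * t)))
          MeasureTheory.volume 0 x := aux_int2 a 1 x ha
      have hint1 : IntervalIntegrable (fun t : ℝ => a * t ^ (a - 1))
          MeasureTheory.volume 0 x :=
        (intervalIntegral.intervalIntegrable_rpow' (r := a - 1) (by linarith)).const_mul a
      have hpt : ∀ t ∈ Icc (0:ℝ) x,
          a * (a + 1) * (t ^ (a - 1) * Real.exp (-t))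
            ≤ a * t ^ (a - 1) + a * ((a * t ^ (a - 1) - 1 * t ^ a) * Real.exp (-(1 * t))) := by
        intro t ht
        rcases eq_or_lt_of_le ht.1 with h0 | h0
        · rw [← h0]
          simp [Real.zero_rpow ha.ne']
          ring_nf
          simp [le_refl]
        · have hta : t ^ a = t ^ (a - 1) * t := by
            simpa using Real.rpow_add_one h0.ne' (a - 1)
          have he : (1 + t) * Real.exp (-t) ≤ 1 := by
            calc (1 + t) * Real.exp (-t) ≤ Real.exp t * Real.exp (-t) :=
                mul_le_mul_of_nonneg_right (by linarith [Real.add_one_le_exp t])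
                  (Real.exp_pos _).le
              _ = 1 := by rw [← Real.exp_add]; simp
          have key : (a + 1) * Real.exp (-t) ≤ 1 + (a - t) * Real.exp (-t) := by
            nlinarith [he]
          calc a * (a + 1) * (t ^ (a - 1) * Real.exp (-t))
              = t ^ (a - 1) * (a * ((a + 1) * Real.exp (-t))) := by ring
            _ ≤ t ^ (a - 1) * (a * (1 + (a - t) * Real.exp (-t))) := by
                apply mul_le_mul_of_nonneg_left _ (Real.rpow_nonneg ht.1 _)
                exact mul_le_mul_of_nonneg_left key ha.le
            _ = a * t ^ (a - 1)
                + a * ((a * t ^ (a - 1) - 1 * (t ^ (a - 1) * t)) * Real.exp (-(1 * t))) := by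
                rw [one_mul]; ring_nf
            _ = _ := by rw [← hta]
      have hmono := intervalIntegral.integral_mono_on hx
        ((hγint.const_mul (a * (a + 1))))
        (hint1.add (hint2.const_mul a)) hpt
      rw [intervalIntegral.integral_const_mul,
        intervalIntegral.integral_add hint1 (hint2.const_mul a),
        intervalIntegral.integral_const_mul, intervalIntegral.integral_const_mul,
        hval, hI2] at hmono
      simp only [one_mul] at hmono
      -- hmono : a * (a+1) * γ ≤ x^a + a * (x^a * exp(-x))
      have hfin : lowerGamma a x ≤ x ^ a * (1 + a * Real.exp (-x)) / (a * (a + 1)) := by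
        rw [le_div_iff₀ (by positivity), mul_comm]
        calc a * (a + 1) * lowerGamma a x
            ≤ a * (x ^ a / a) + a * (x ^ a * Real.exp (-x)) := hmono
          _ = x ^ a * (1 + a * Real.exp (-x)) := by field_simp
      have ha0 : a ≠ 0 := ha.ne'
      have ha10 : a + 1 ≠ 0 := ha1.ne'
      calc lowerGamma a x ≤ x ^ a * (1 + a * Real.exp (-x)) / (a * (a + 1)) := hfin
        _ = x ^ a / a * ((1 + a * Real.exp (-x)) / (a + 1)) := by field_simp
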